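/- Let A be the adjacency matrix of a random non-uniform hypergraph as in the context with d := Σ_{m=2}^M (m−1)d_m, and let W := A − EA. Let 𝓝 be a finite subset of the unit sphere of ℝⁿ with |𝓝| ≤ 5ⁿ. For a unit vector x, let 𝓛(x) := { (i,j) ∈ {1,…,n}² : |x_i x_j| ≤ √d/n } be the set of light pairs. Then ℙ( sup_{x ∈ 𝓝} | Σ_{(i,j) ∈ 𝓛(x)} W_{ij} x_i x_j | ≤ 5M(M−1)·√d ) ≥ 1 − 2e^{−n}. -/

import Mathlib

open MeasureTheory

/-- The adjacency matrix of the random non-uniform hypergraph with edge indicators `T`. -/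
noncomputable def adjMatrix (n M : ℕ) {Ω : Type*} (T : Finset (Fin n) → Ω → Bool) (ω : Ω) :
    Matrix (Fin n) (Fin n) ℝ :=
  Matrix.of fun i j => if i = j then 0 else
    ∑ m ∈ Finset.Icc 2 M, ∑ e ∈ Finset.univ.filter
      (fun e : Finset (Fin n) => e.card = m ∧ i ∈ e ∧ j ∈ e),
        (if T e ω then (1 : ℝ) else 0)

/-- The entrywise expectation of the adjacency matrix, for edge probabilities `p`. -/
noncomputable def expAdj (n M : ℕ) (p : Finset (Fin n) → ℝ) : Matrix (Fin n) (Fin n) ℝ :=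
  Matrix.of fun i j => if i = j then 0 else
    ∑ m ∈ Finset.Icc 2 M, ∑ e ∈ Finset.univ.filter
      (fun e : Finset (Fin n) => e.card = m ∧ i ∈ e ∧ j ∈ e), p e

section AuxReal

lemma exp_taylor_bound' {u : ℝ} (hu : |u| ≤ 1) : Real.exp u - 1 - u ≤ 3/4 * u^2 := by
  have h := Real.exp_bound hu (n := 2) (by norm_num)
  have h2 : |Real.exp u - (1 + u)| ≤ u^2 * (3/(2*2)) := by
    simpa [Finset.sum_range_succ, Nat.factorial] using h
  have := (abs_le.mp h2).2
  nlinarith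

lemma bern_mgf_ineq' {p u : ℝ} (hp0 : 0 ≤ p) (hu : |u| ≤ 1) :
    p * Real.exp (u*(1-p)) + (1-p) * Real.exp (-(u*p)) ≤ Real.exp (3/4 * (p*u^2)) := by
  have h1 : Real.exp (u*(1-p)) = Real.exp u * Real.exp (-(u*p)) := by
    rw [← Real.exp_add]; ring_nf
  have key : p * Real.exp (u*(1-p)) + (1-p) * Real.exp (-(u*p))
      = (1 + p * (Real.exp u - 1)) * Real.exp (-(u*p)) := by rw [h1]; ring
  rw [key]
  have h2 : (1 + p * (Real.exp u - 1)) ≤ Real.exp (p * (Real.exp u - 1)) := by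
    have := Real.add_one_le_exp (p * (Real.exp u - 1)); linarith
  refine (mul_le_mul_of_nonneg_right h2 (Real.exp_nonneg _)).trans ?_
  rw [← Real.exp_add]
  apply Real.exp_le_exp.mpr
  have h4 : Real.exp u - 1 - u ≤ 3/4 * u^2 := exp_taylor_bound' hu
  have h5 : p * (Real.exp u - 1 - u) ≤ p * (3/4 * u^2) :=
    mul_le_mul_of_nonneg_left h4 hp0
  nlinarith

end AuxReal

section AuxIntegral

variable {Ω : Type*} [MeasurableSpace Ω] {μ : Measure Ω}

lemma bool_ite_eq_indicator' (T : Ω → Bool) (a c : ℝ) :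
    (fun ω => if T ω then a else c)
      = fun ω => ({ω | T ω = true}).indicator (fun _ => a - c) ω + c := by
  funext ω
  by_cases h : T ω <;> simp [Set.indicator, h]

lemma integrable_bool_ite' [IsFiniteMeasure μ] (T : Ω → Bool) (hT : Measurable T) (a c : ℝ) :
    Integrable (fun ω => if T ω then a else c) μ := by
  rw [bool_ite_eq_indicator']
  have hs : MeasurableSet {ω | T ω = true} := hT (measurableSet_singleton true)
  exact ((integrable_const (a - c)).indicator hs).add (integrable_const c)

lemma integral_bool_ite' [IsProbabilityMeasure μ] (T : Ω → Bool) (hT : Measurable T)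
    {pe : ℝ} (hpe0 : 0 ≤ pe) (hμ : μ {ω | T ω = true} = ENNReal.ofReal pe) (a c : ℝ) :
    ∫ ω, (if T ω then a else c) ∂μ = pe * a + (1 - pe) * c := by
  rw [bool_ite_eq_indicator']
  have hs : MeasurableSet {ω | T ω = true} := hT (measurableSet_singleton true)
  rw [integral_add (((integrable_const (a - c)).indicator hs)) (integrable_const c),
    integral_indicator_const _ hs, integral_const, measureReal_def, hμ, ENNReal.toReal_ofReal hpe0]
  simp [measure_univ]
  ring

lemma pe_le_one' [IsProbabilityMeasure μ] (T : Ω → Bool)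
    {pe : ℝ} (hμ : μ {ω | T ω = true} = ENNReal.ofReal pe) : pe ≤ 1 := by
  have := prob_le_one (μ := μ) (s := {ω | T ω = true})
  rw [hμ] at this
  exact (ENNReal.ofReal_le_one).mp this

open ProbabilityTheory in
lemma chernoff_tail' [IsProbabilityMeasure μ] {ι : Type*}
    (T : ι → Ω → Bool) (hTmeas : ∀ e, Measurable (T e))
    (hTindep : ProbabilityTheory.iIndepFun T μ)
    (p : ι → ℝ) (hp0 : ∀ e, 0 ≤ p e)
    (hpT : ∀ e, μ {ω | T e ω = true} = ENNReal.ofReal (p e))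
    (E : Finset ι) (w : ι → ℝ) (b σ2 t : ℝ) (hb : 0 < b)
    (hw : ∀ e ∈ E, |w e| ≤ b)
    (hσ : ∑ e ∈ E, p e * (w e)^2 ≤ σ2) :
    μ {ω | t ≤ ∑ e ∈ E, w e * ((if T e ω then (1:ℝ) else 0) - p e)}
      ≤ ENNReal.ofReal (Real.exp (-(t/b) + 3/4 * (σ2/b^2))) := by
  classical
  set lam : ℝ := 1/b with hlam
  have hlam0 : 0 ≤ lam := by positivity
  set X : ι → Ω → ℝ := fun e ω => w e * ((if T e ω then (1:ℝ) else 0) - p e) with hX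
  have hXmeas : ∀ e, Measurable (X e) := by
    intro e
    have : X e = (fun bo : Bool => w e * ((if bo then (1:ℝ) else 0) - p e)) ∘ T e := rfl
    rw [this]
    exact (measurable_from_top).comp (hTmeas e)
  have hXindep : ProbabilityTheory.iIndepFun X μ :=
    hTindep.comp (fun e bo => w e * ((if bo then (1:ℝ) else 0) - p e))
      (fun e => measurable_from_top)
  have hexp_eq : ∀ e, (fun ω => Real.exp (lam * X e ω))
      = fun ω => if T e ω then Real.exp (lam * w e * (1 - p e))
        else Real.exp (-(lam * w e * p e)) := by
    intro e; funext ω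
    by_cases h : T e ω <;> simp [hX, h] <;> ring_nf
  have hint : ∀ e, Integrable (fun ω => Real.exp (lam * X e ω)) μ := by
    intro e; rw [hexp_eq e]; exact integrable_bool_ite' _ (hTmeas e) _ _
  have hmgf_le : ∀ e ∈ E, mgf (X e) μ lam ≤ Real.exp (3/4 * (p e * (lam * w e)^2)) := by
    intro e he
    have h1 : mgf (X e) μ lam = ∫ ω, Real.exp (lam * X e ω) ∂μ := rfl
    rw [h1, hexp_eq e, integral_bool_ite' _ (hTmeas e) (hp0 e) (hpT e)]
    have hu : |lam * w e| ≤ 1 := by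
      rw [abs_mul, hlam, abs_of_nonneg (by positivity : (0:ℝ) ≤ 1/b)]
      rw [div_mul_eq_mul_div, div_le_one hb, one_mul]
      exact hw e he
    have := bern_mgf_ineq' (p := p e) (u := lam * w e) (hp0 e) hu
    convert this using 3 <;> ring
  have hintS : Integrable (fun ω => Real.exp (lam * (∑ e ∈ E, X e) ω)) μ :=
    hXindep.integrable_exp_mul_sum hXmeas (fun e _ => hint e)
  have hch := measure_ge_le_exp_mul_mgf (μ := μ) (X := ∑ e ∈ E, X e) t hlam0 hintS
  rw [hXindep.mgf_sum hXmeas E] at hch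
  have hprod : ∏ e ∈ E, mgf (X e) μ lam
      ≤ ∏ e ∈ E, Real.exp (3/4 * (p e * (lam * w e)^2)) :=
    Finset.prod_le_prod (fun e _ => mgf_nonneg) hmgf_le
  have hprodexp : ∏ e ∈ E, Real.exp (3/4 * (p e * (lam * w e)^2))
      = Real.exp (∑ e ∈ E, 3/4 * (p e * (lam * w e)^2)) := by
    rw [Real.exp_sum]
  have hsum_le : ∑ e ∈ E, 3/4 * (p e * (lam * w e)^2) ≤ 3/4 * (σ2/b^2) := by
    have heq : ∑ e ∈ E, 3/4 * (p e * (lam * w e)^2)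
        = 3/4 * lam^2 * ∑ e ∈ E, p e * (w e)^2 := by
      rw [Finset.mul_sum]; apply Finset.sum_congr rfl; intro e _; ring
    rw [heq, hlam]
    have hb2 : (1/b)^2 = 1/b^2 := by rw [one_div, one_div, ← inv_pow]
    calc 3/4 * (1/b)^2 * ∑ e ∈ E, p e * (w e)^2
        ≤ 3/4 * (1/b)^2 * σ2 := by
          apply mul_le_mul_of_nonneg_left hσ (by positivity)
      _ = 3/4 * (σ2/b^2) := by rw [hb2]; ring
  have hfin : (μ {ω | t ≤ (∑ e ∈ E, X e) ω}).toReal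
      ≤ Real.exp (-(t/b) + 3/4 * (σ2/b^2)) := by
    refine hch.trans ?_
    calc Real.exp (-lam * t) * ∏ e ∈ E, mgf (X e) μ lam
        ≤ Real.exp (-lam * t) * Real.exp (∑ e ∈ E, 3/4 * (p e * (lam * w e)^2)) := by
          rw [← hprodexp]
          exact mul_le_mul_of_nonneg_left hprod (Real.exp_nonneg _)
      _ = Real.exp (-lam * t + ∑ e ∈ E, 3/4 * (p e * (lam * w e)^2)) := by
          rw [← Real.exp_add]
      _ ≤ Real.exp (-(t/b) + 3/4 * (σ2/b^2)) := by
          apply Real.exp_le_exp.mpr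
          have : -lam * t = -(t/b) := by rw [hlam]; ring
          linarith [hsum_le]
  have hset : {ω | t ≤ ∑ e ∈ E, w e * ((if T e ω then (1:ℝ) else 0) - p e)}
      = {ω | t ≤ (∑ e ∈ E, X e) ω} := by
    ext ω; simp [hX, Finset.sum_apply]
  rw [hset]
  exact (ENNReal.le_ofReal_iff_toReal_le (measure_ne_top μ _) (Real.exp_nonneg _)).mpr hfin

end AuxIntegral

section AuxCombinatorics

lemma choose_ratio' {n m : ℕ} (hn : 2 ≤ n) (hm : 2 ≤ m) :
    n * (n-2).choose (m-2) ≤ (m-1) * n.choose (m-1) := by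
  obtain ⟨n', rfl⟩ : ∃ n', n = n' + 2 := ⟨n - 2, by omega⟩
  obtain ⟨m', rfl⟩ : ∃ m', m = m' + 2 := ⟨m - 2, by omega⟩
  simp only [Nat.add_sub_cancel]
  have h1 : (n' + 2) * Nat.choose n' m' ≤ (n' + 2) * Nat.choose (n' + 1) m' :=
    Nat.mul_le_mul_left _ (Nat.choose_le_choose m' (by omega))
  have h2 : (n' + 2) * Nat.choose (n' + 1) m' = Nat.choose (n' + 2) (m' + 1) * (m' + 1) := by
    have := Nat.add_one_mul_choose_eq (n' + 1) m'
    simpa [Nat.succ_eq_add_one] using this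
  calc (n' + 2) * Nat.choose n' m' ≤ (n' + 2) * Nat.choose (n' + 1) m' := h1
    _ = Nat.choose (n' + 2) (m' + 1) * (m' + 1) := h2
    _ = (m' + 2 - 1) * Nat.choose (n' + 2) (m' + 2 - 1) := by
        simp only [show m' + 2 - 1 = m' + 1 from rfl]; ring

lemma count_superset' {n : ℕ} {i j : Fin n} (hij : i ≠ j) {m : ℕ} (hm : 2 ≤ m) :
    (Finset.univ.filter (fun e : Finset (Fin n) => e.card = m ∧ i ∈ e ∧ j ∈ e)).card
      = (n-2).choose (m-2) := by
  classical
  have hpair : ({i, j} : Finset (Fin n)).card = 2 := by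
    rw [Finset.card_insert_of_notMem (by simp [hij]), Finset.card_singleton]
  have key : (Finset.univ.filter (fun e : Finset (Fin n) => e.card = m ∧ i ∈ e ∧ j ∈ e)).card
      = (Finset.powersetCard (m-2) (({i,j} : Finset (Fin n))ᶜ)).card := by
    apply Finset.card_bij' (fun e _ => e \ {i, j}) (fun f _ => f ∪ {i, j})
    · intro e he
      simp only [Finset.mem_filter, Finset.mem_univ, true_and] at he
      rw [Finset.sdiff_union_of_subset]
      intro a ha
      simp at ha
      rcases ha with rfl | rfl
      · exact he.2.1
      · exact he.2.2
    · intro f hf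
      rw [Finset.mem_powersetCard] at hf
      have hdisj : Disjoint f ({i,j} : Finset (Fin n)) := by
        rw [Finset.disjoint_left]
        intro a ha
        have := hf.1 ha
        simpa [Finset.mem_compl] using this
      rw [Finset.union_sdiff_cancel_right hdisj]
    · intro e he
      simp only [Finset.mem_filter, Finset.mem_univ, true_and] at he
      obtain ⟨hc, hi, hj⟩ := he
      rw [Finset.mem_powersetCard]
      constructor
      · intro a ha
        simp only [Finset.mem_sdiff, Finset.mem_insert, Finset.mem_singleton] at ha
        simp only [Finset.mem_compl, Finset.mem_insert, Finset.mem_singleton]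
        tauto
      · rw [Finset.card_sdiff_of_subset (by intro a ha; simp at ha; rcases ha with rfl | rfl <;> assumption)]
        rw [hc, hpair]
    · intro f hf
      rw [Finset.mem_powersetCard] at hf
      obtain ⟨hsub, hcard⟩ := hf
      have hdisj : Disjoint f ({i,j} : Finset (Fin n)) := by
        rw [Finset.disjoint_left]
        intro a ha
        have := hsub ha
        simpa [Finset.mem_compl] using this
      simp only [Finset.mem_filter, Finset.mem_univ, true_and]
      refine ⟨?_, ?_, ?_⟩
      · rw [Finset.card_union_of_disjoint hdisj, hcard, hpair]
        omega
      · exact Finset.mem_union_right _ (by simp)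
      · exact Finset.mem_union_right _ (by simp)
  rw [key, Finset.card_powersetCard, Finset.card_compl, hpair, Fintype.card_fin]

lemma sum_over_edges' (n : ℕ) {m : ℕ} (hm : 2 ≤ m) (f : Fin n × Fin n → ℝ) :
    ∑ e ∈ Finset.univ.filter (fun e : Finset (Fin n) => e.card = m),
      ∑ q ∈ Finset.univ.filter (fun q : Fin n × Fin n => q.1 ≠ q.2 ∧ q.1 ∈ e ∧ q.2 ∈ e), f q
    = ((n-2).choose (m-2) : ℝ) *
        ∑ q ∈ Finset.univ.filter (fun q : Fin n × Fin n => q.1 ≠ q.2), f q := by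
  classical
  have h1 : ∀ e : Finset (Fin n),
      ∑ q ∈ Finset.univ.filter (fun q : Fin n × Fin n => q.1 ≠ q.2 ∧ q.1 ∈ e ∧ q.2 ∈ e), f q
      = ∑ q ∈ Finset.univ.filter (fun q : Fin n × Fin n => q.1 ≠ q.2),
          (if q.1 ∈ e ∧ q.2 ∈ e then f q else 0) := by
    intro e
    rw [← Finset.sum_filter, Finset.filter_filter]
  calc ∑ e ∈ Finset.univ.filter (fun e : Finset (Fin n) => e.card = m),
        ∑ q ∈ Finset.univ.filter (fun q : Fin n × Fin n => q.1 ≠ q.2 ∧ q.1 ∈ e ∧ q.2 ∈ e), f q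
      = ∑ e ∈ Finset.univ.filter (fun e : Finset (Fin n) => e.card = m),
          ∑ q ∈ Finset.univ.filter (fun q : Fin n × Fin n => q.1 ≠ q.2),
            (if q.1 ∈ e ∧ q.2 ∈ e then f q else 0) :=
        Finset.sum_congr rfl (fun e _ => h1 e)
    _ = ∑ q ∈ Finset.univ.filter (fun q : Fin n × Fin n => q.1 ≠ q.2),
          ∑ e ∈ Finset.univ.filter (fun e : Finset (Fin n) => e.card = m),
            (if q.1 ∈ e ∧ q.2 ∈ e then f q else 0) := Finset.sum_comm
    _ = ∑ q ∈ Finset.univ.filter (fun q : Fin n × Fin n => q.1 ≠ q.2),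
          ((n-2).choose (m-2) : ℝ) * f q := by
        apply Finset.sum_congr rfl
        intro q hq
        have hne : q.1 ≠ q.2 := by
          simpa using (Finset.mem_filter.mp hq).2
        rw [← Finset.sum_filter, Finset.filter_filter, Finset.sum_const,
          count_superset' hne hm, nsmul_eq_mul]
    _ = _ := by rw [← Finset.mul_sum]

lemma sum_sq_pairs_le' (n : ℕ) (x : Fin n → ℝ) (hx : ∑ i, (x i)^2 = 1) :
    ∑ q ∈ Finset.univ.filter (fun q : Fin n × Fin n => q.1 ≠ q.2), (x q.1 * x q.2)^2 ≤ 1 := by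
  have h1 : ∑ q ∈ Finset.univ.filter (fun q : Fin n × Fin n => q.1 ≠ q.2), (x q.1 * x q.2)^2
      ≤ ∑ q : Fin n × Fin n, (x q.1 * x q.2)^2 :=
    Finset.sum_le_sum_of_subset_of_nonneg (Finset.filter_subset _ _)
      (fun q _ _ => sq_nonneg _)
  have h2 : ∑ q : Fin n × Fin n, (x q.1 * x q.2)^2 = 1 := by
    rw [Fintype.sum_prod_type]
    simp only [mul_pow]
    rw [← Finset.sum_mul_sum]
    rw [hx]
    norm_num
  linarith

end AuxCombinatorics

section AuxBounds

lemma variance_bound' (n M : ℕ) (hn : 2 ≤ n) (hM : 2 ≤ M)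
    (p : Finset (Fin n) → ℝ) (hp0 : ∀ e, 0 ≤ p e)
    (dm : ℕ → ℝ) (hdm : ∀ m, 0 ≤ dm m)
    (hpbound : ∀ e : Finset (Fin n), e.card ∈ Finset.Icc 2 M →
      p e ≤ dm e.card / (n.choose (e.card - 1)))
    (x : Fin n → ℝ) (hx : ∑ i, (x i)^2 = 1) (r : ℝ) :
    ∑ e ∈ Finset.univ.filter (fun e : Finset (Fin n) => e.card ∈ Finset.Icc 2 M),
      p e * (∑ q ∈ Finset.univ.filter (fun q : Fin n × Fin n =>
          (|x q.1 * x q.2| ≤ r) ∧ q.1 ≠ q.2 ∧ q.1 ∈ e ∧ q.2 ∈ e), x q.1 * x q.2)^2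
    ≤ ((M:ℝ) * M - M) * ((∑ m ∈ Finset.Icc 2 M, ((m:ℝ)-1) * dm m) / n) := by
  classical
  set V : Finset (Fin n) → ℝ := fun e =>
    ∑ q ∈ Finset.univ.filter (fun q : Fin n × Fin n =>
      q.1 ≠ q.2 ∧ q.1 ∈ e ∧ q.2 ∈ e), (x q.1 * x q.2)^2 with hV
  have hV0 : ∀ e, 0 ≤ V e := fun e => Finset.sum_nonneg (fun q _ => sq_nonneg _)
  have step1 : ∀ e ∈ Finset.univ.filter (fun e : Finset (Fin n) => e.card ∈ Finset.Icc 2 M),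
      p e * (∑ q ∈ Finset.univ.filter (fun q : Fin n × Fin n =>
          (|x q.1 * x q.2| ≤ r) ∧ q.1 ≠ q.2 ∧ q.1 ∈ e ∧ q.2 ∈ e), x q.1 * x q.2)^2
      ≤ ((M:ℝ) * M - M) * (p e * V e) := by
    intro e he
    have hcard : e.card ∈ Finset.Icc 2 M := (Finset.mem_filter.mp he).2
    obtain ⟨hm2, hmM⟩ := Finset.mem_Icc.mp hcard
    set s := Finset.univ.filter (fun q : Fin n × Fin n =>
      (|x q.1 * x q.2| ≤ r) ∧ q.1 ≠ q.2 ∧ q.1 ∈ e ∧ q.2 ∈ e) with hs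
    set P := Finset.univ.filter (fun q : Fin n × Fin n =>
      q.1 ≠ q.2 ∧ q.1 ∈ e ∧ q.2 ∈ e) with hP
    have hsub : s ⊆ P := by
      intro q hq
      simp only [hs, hP, Finset.mem_filter, Finset.mem_univ, true_and] at hq ⊢
      exact hq.2
    have hPod : P = e.offDiag := by
      ext q
      simp only [hP, Finset.mem_filter, Finset.mem_univ, true_and, Finset.mem_offDiag]
      tauto
    have hPcard : (P.card : ℝ) ≤ (M:ℝ) * M - M := by
      have h1 : P.card = e.card * e.card - e.card := by rw [hPod, Finset.offDiag_card]
      have hc1 : ((e.card * e.card - e.card : ℕ) : ℝ) = (e.card:ℝ) * e.card - e.card := by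
        have : e.card ≤ e.card * e.card := Nat.le_mul_of_pos_left _ (by omega)
        push_cast [Nat.cast_sub this]; ring
      have hmMR : (e.card : ℝ) ≤ (M:ℝ) := by exact_mod_cast hmM
      have hm2R : (2:ℝ) ≤ (e.card : ℝ) := by exact_mod_cast hm2
      rw [h1, hc1]
      nlinarith
    have hCS : (∑ q ∈ s, x q.1 * x q.2)^2 ≤ (s.card : ℝ) * ∑ q ∈ s, (x q.1 * x q.2)^2 :=
      sq_sum_le_card_mul_sum_sq
    have hsum_le : ∑ q ∈ s, (x q.1 * x q.2)^2 ≤ V e :=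
      Finset.sum_le_sum_of_subset_of_nonneg hsub (fun q _ _ => sq_nonneg _)
    have hscard : (s.card : ℝ) ≤ (M:ℝ) * M - M := by
      calc (s.card : ℝ) ≤ (P.card : ℝ) := by exact_mod_cast Finset.card_le_card hsub
        _ ≤ _ := hPcard
    have hw2 : (∑ q ∈ s, x q.1 * x q.2)^2 ≤ ((M:ℝ) * M - M) * V e := by
      calc (∑ q ∈ s, x q.1 * x q.2)^2 ≤ (s.card : ℝ) * ∑ q ∈ s, (x q.1 * x q.2)^2 := hCS
        _ ≤ ((M:ℝ) * M - M) * V e := by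
            apply mul_le_mul hscard hsum_le (Finset.sum_nonneg (fun q _ => sq_nonneg _))
            linarith [hscard, Nat.cast_nonneg (α := ℝ) s.card]
    calc p e * (∑ q ∈ s, x q.1 * x q.2)^2 ≤ p e * (((M:ℝ) * M - M) * V e) :=
          mul_le_mul_of_nonneg_left hw2 (hp0 e)
      _ = ((M:ℝ) * M - M) * (p e * V e) := by ring
  refine (Finset.sum_le_sum step1).trans ?_
  rw [← Finset.mul_sum]
  have hMM0 : (0:ℝ) ≤ (M:ℝ) * M - M := by
    have : (2:ℝ) ≤ (M:ℝ) := by exact_mod_cast hM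
    nlinarith
  refine mul_le_mul_of_nonneg_left ?_ hMM0
  have fib := Finset.sum_fiberwise_of_maps_to (s := Finset.univ.filter
      (fun e : Finset (Fin n) => e.card ∈ Finset.Icc 2 M)) (t := Finset.Icc 2 M)
      (g := Finset.card) (fun e he => (Finset.mem_filter.mp he).2)
      (fun e => p e * V e)
  rw [← fib]
  have hSoff := sum_sq_pairs_le' n x hx
  have hSoff0 : 0 ≤ ∑ q ∈ Finset.univ.filter (fun q : Fin n × Fin n => q.1 ≠ q.2),
      (x q.1 * x q.2)^2 := Finset.sum_nonneg (fun q _ => sq_nonneg _)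
  have permB : ∀ m ∈ Finset.Icc 2 M,
      ∑ e ∈ (Finset.univ.filter (fun e : Finset (Fin n) => e.card ∈ Finset.Icc 2 M)).filter
        (fun e => e.card = m), p e * V e ≤ ((m:ℝ)-1) * dm m / n := by
    intro m hm
    obtain ⟨hm2, hmM⟩ := Finset.mem_Icc.mp hm
    have hfib : (Finset.univ.filter (fun e : Finset (Fin n) => e.card ∈ Finset.Icc 2 M)).filter
          (fun e => e.card = m)
        = Finset.univ.filter (fun e : Finset (Fin n) => e.card = m) := by
      ext e
      simp only [Finset.mem_filter, Finset.mem_univ, true_and]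
      exact ⟨fun h => h.2, fun h => ⟨h ▸ hm, h⟩⟩
    rw [hfib]
    have hpb : ∀ e ∈ Finset.univ.filter (fun e : Finset (Fin n) => e.card = m),
        p e * V e ≤ (dm m / (n.choose (m-1))) * V e := by
      intro e he
      have hcm : e.card = m := (Finset.mem_filter.mp he).2
      have := hpbound e (by rw [hcm]; exact hm)
      rw [hcm] at this
      exact mul_le_mul_of_nonneg_right this (hV0 e)
    refine (Finset.sum_le_sum hpb).trans ?_
    rw [← Finset.mul_sum]
    have hcount : ∑ e ∈ Finset.univ.filter (fun e : Finset (Fin n) => e.card = m), V e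
        = ((n-2).choose (m-2) : ℝ) * ∑ q ∈ Finset.univ.filter
            (fun q : Fin n × Fin n => q.1 ≠ q.2), (x q.1 * x q.2)^2 := by
      exact sum_over_edges' n hm2 (fun q => (x q.1 * x q.2)^2)
    rw [hcount]
    by_cases hC : n.choose (m-1) = 0
    · rw [hC]
      simp only [Nat.cast_zero, div_zero, zero_mul]
      have hm1R : (1:ℝ) ≤ (m:ℝ) := by exact_mod_cast (by omega : 1 ≤ m)
      apply div_nonneg (mul_nonneg (by linarith) (hdm m)) (by positivity)
    · have hCpos : (0:ℝ) < (n.choose (m-1) : ℝ) := by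
        exact_mod_cast Nat.pos_of_ne_zero hC
      have hnpos : (0:ℝ) < (n:ℝ) := by positivity
      have hratio : ((n-2).choose (m-2) : ℝ) / (n.choose (m-1) : ℝ) ≤ ((m:ℝ)-1) / n := by
        rw [div_le_div_iff₀ hCpos hnpos]
        have hnat := choose_ratio' hn hm2
        have hcast := (Nat.cast_le (α := ℝ)).mpr hnat
        push_cast [Nat.cast_sub (show 1 ≤ m by omega)] at hcast
        linarith
      calc dm m / (n.choose (m-1) : ℝ) * (((n-2).choose (m-2) : ℝ) * ∑ q ∈ Finset.univ.filter
            (fun q : Fin n × Fin n => q.1 ≠ q.2), (x q.1 * x q.2)^2)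
          ≤ dm m / (n.choose (m-1) : ℝ) * (((n-2).choose (m-2) : ℝ) * 1) := by
            apply mul_le_mul_of_nonneg_left _ (div_nonneg (hdm m) (le_of_lt hCpos))
            exact mul_le_mul_of_nonneg_left hSoff (by positivity)
        _ = dm m * (((n-2).choose (m-2) : ℝ) / (n.choose (m-1) : ℝ)) := by ring
        _ ≤ dm m * (((m:ℝ)-1) / n) := mul_le_mul_of_nonneg_left hratio (hdm m)
        _ = ((m:ℝ)-1) * dm m / n := by ring
  refine (Finset.sum_le_sum permB).trans ?_
  rw [Finset.sum_div]

lemma weight_abs_le' (n M : ℕ) (hM : 2 ≤ M) (x : Fin n → ℝ) (r : ℝ) (hr : 0 ≤ r)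
    (e : Finset (Fin n)) (hm2 : 2 ≤ e.card) (hmM : e.card ≤ M) :
    |∑ q ∈ Finset.univ.filter (fun q : Fin n × Fin n =>
        (|x q.1 * x q.2| ≤ r) ∧ q.1 ≠ q.2 ∧ q.1 ∈ e ∧ q.2 ∈ e), x q.1 * x q.2|
      ≤ ((M:ℝ) * M - M) * r := by
  set s := Finset.univ.filter (fun q : Fin n × Fin n =>
    (|x q.1 * x q.2| ≤ r) ∧ q.1 ≠ q.2 ∧ q.1 ∈ e ∧ q.2 ∈ e) with hs
  have habs : |∑ q ∈ s, x q.1 * x q.2| ≤ ∑ q ∈ s, |x q.1 * x q.2| :=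
    Finset.abs_sum_le_sum_abs _ _
  have hterm : ∀ q ∈ s, |x q.1 * x q.2| ≤ r := by
    intro q hq
    exact ((Finset.mem_filter.mp hq).2).1
  have hsum : ∑ q ∈ s, |x q.1 * x q.2| ≤ s.card • r := Finset.sum_le_card_nsmul s _ r hterm
  have hsub : s ⊆ e.offDiag := by
    intro q hq
    have := (Finset.mem_filter.mp hq).2
    rw [Finset.mem_offDiag]
    tauto
  have hcard : (s.card : ℝ) ≤ (M:ℝ) * M - M := by
    have h1 : s.card ≤ e.offDiag.card := Finset.card_le_card hsub
    have h2 : e.offDiag.card = e.card * e.card - e.card := by rw [Finset.offDiag_card]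
    have hc1 : ((e.card * e.card - e.card : ℕ) : ℝ) = (e.card:ℝ) * e.card - e.card := by
      have : e.card ≤ e.card * e.card := Nat.le_mul_of_pos_left _ (by omega)
      push_cast [Nat.cast_sub this]; ring
    have hmMR : (e.card : ℝ) ≤ (M:ℝ) := by exact_mod_cast hmM
    have hm2R : (2:ℝ) ≤ (e.card : ℝ) := by exact_mod_cast hm2
    calc (s.card : ℝ) ≤ ((e.card * e.card - e.card : ℕ) : ℝ) := by
          rw [← h2]; exact_mod_cast h1
      _ = (e.card:ℝ) * e.card - e.card := hc1
      _ ≤ (M:ℝ) * M - M := by nlinarith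
  calc |∑ q ∈ s, x q.1 * x q.2| ≤ ∑ q ∈ s, |x q.1 * x q.2| := habs
    _ ≤ s.card • r := hsum
    _ = (s.card : ℝ) * r := nsmul_eq_mul _ _
    _ ≤ ((M:ℝ) * M - M) * r := mul_le_mul_of_nonneg_right hcard hr

end AuxBounds

lemma light_identity' (n M : ℕ) {Ω : Type*} (T : Finset (Fin n) → Ω → Bool)
    (p : Finset (Fin n) → ℝ) (x : Fin n → ℝ) (r : ℝ) (ω : Ω) :
    ∑ q ∈ Finset.univ.filter (fun q : Fin n × Fin n => |x q.1 * x q.2| ≤ r),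
      (adjMatrix n M T ω - expAdj n M p) q.1 q.2 * x q.1 * x q.2
    = ∑ e ∈ Finset.univ.filter (fun e : Finset (Fin n) => e.card ∈ Finset.Icc 2 M),
        (∑ q ∈ Finset.univ.filter (fun q : Fin n × Fin n =>
            (|x q.1 * x q.2| ≤ r) ∧ q.1 ≠ q.2 ∧ q.1 ∈ e ∧ q.2 ∈ e), x q.1 * x q.2)
          * ((if T e ω then (1:ℝ) else 0) - p e) := by
  classical
  set c : Finset (Fin n) → ℝ := fun e => (if T e ω then (1:ℝ) else 0) - p e with hc
  have entry : ∀ q : Fin n × Fin n,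
      (adjMatrix n M T ω - expAdj n M p) q.1 q.2
        = if q.1 = q.2 then 0 else ∑ m ∈ Finset.Icc 2 M,
            ∑ e ∈ Finset.univ.filter
              (fun e : Finset (Fin n) => e.card = m ∧ q.1 ∈ e ∧ q.2 ∈ e), c e := by
    intro q
    simp only [Matrix.sub_apply, adjMatrix, expAdj, Matrix.of_apply]
    by_cases h : q.1 = q.2
    · simp [h]
    · simp only [h, if_false]
      rw [← Finset.sum_sub_distrib]
      apply Finset.sum_congr rfl
      intro m _
      rw [← Finset.sum_sub_distrib]
  simp only [entry]
  rw [← Finset.sum_filter_of_ne (p := fun q : Fin n × Fin n => q.1 ≠ q.2)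
    (by intro q _ hq; intro hdiag; apply hq; rw [hdiag]; simp)]
  set Q := (Finset.univ.filter (fun q : Fin n × Fin n => |x q.1 * x q.2| ≤ r)).filter
    (fun q : Fin n × Fin n => q.1 ≠ q.2) with hQ
  have step1 : ∑ q ∈ Q, (if q.1 = q.2 then 0 else ∑ m ∈ Finset.Icc 2 M,
        ∑ e ∈ Finset.univ.filter
          (fun e : Finset (Fin n) => e.card = m ∧ q.1 ∈ e ∧ q.2 ∈ e), c e) * x q.1 * x q.2
      = ∑ m ∈ Finset.Icc 2 M, ∑ q ∈ Q, ∑ e ∈ Finset.univ.filter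
          (fun e : Finset (Fin n) => e.card = m ∧ q.1 ∈ e ∧ q.2 ∈ e), c e * (x q.1 * x q.2) := by
    rw [Finset.sum_comm]
    apply Finset.sum_congr rfl
    intro q hqQ
    have hne : q.1 ≠ q.2 := (Finset.mem_filter.mp hqQ).2
    simp only [hne, if_false, Finset.sum_mul, mul_assoc]
  rw [step1]
  have step2 : ∀ m ∈ Finset.Icc 2 M, ∑ q ∈ Q, ∑ e ∈ Finset.univ.filter
        (fun e : Finset (Fin n) => e.card = m ∧ q.1 ∈ e ∧ q.2 ∈ e), c e * (x q.1 * x q.2)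
      = ∑ e ∈ Finset.univ.filter (fun e : Finset (Fin n) => e.card = m),
          c e * ∑ q ∈ Q.filter (fun q : Fin n × Fin n => q.1 ∈ e ∧ q.2 ∈ e), (x q.1 * x q.2) := by
    intro m _
    have hF : ∀ q : Fin n × Fin n, Finset.univ.filter
          (fun e : Finset (Fin n) => e.card = m ∧ q.1 ∈ e ∧ q.2 ∈ e)
        = (Finset.univ.filter (fun e : Finset (Fin n) => e.card = m)).filter
            (fun e => q.1 ∈ e ∧ q.2 ∈ e) := by
      intro q; rw [Finset.filter_filter]
    calc ∑ q ∈ Q, ∑ e ∈ Finset.univ.filter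
            (fun e : Finset (Fin n) => e.card = m ∧ q.1 ∈ e ∧ q.2 ∈ e), c e * (x q.1 * x q.2)
        = ∑ q ∈ Q, ∑ e ∈ Finset.univ.filter (fun e : Finset (Fin n) => e.card = m),
            (if q.1 ∈ e ∧ q.2 ∈ e then c e * (x q.1 * x q.2) else 0) :=
          Finset.sum_congr rfl (fun q _ => by rw [hF q, Finset.sum_filter])
      _ = ∑ e ∈ Finset.univ.filter (fun e : Finset (Fin n) => e.card = m),
            ∑ q ∈ Q, (if q.1 ∈ e ∧ q.2 ∈ e then c e * (x q.1 * x q.2) else 0) :=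
          Finset.sum_comm
      _ = _ := by
          apply Finset.sum_congr rfl
          intro e _
          rw [← Finset.sum_filter, Finset.mul_sum]
  rw [Finset.sum_congr rfl step2]
  have hw : ∀ e : Finset (Fin n), Q.filter (fun q : Fin n × Fin n => q.1 ∈ e ∧ q.2 ∈ e)
      = Finset.univ.filter (fun q : Fin n × Fin n =>
          (|x q.1 * x q.2| ≤ r) ∧ q.1 ≠ q.2 ∧ q.1 ∈ e ∧ q.2 ∈ e) := by
    intro e; rw [hQ, Finset.filter_filter, Finset.filter_filter]
  have step3 := Finset.sum_fiberwise_of_maps_to (s := Finset.univ.filter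
      (fun e : Finset (Fin n) => e.card ∈ Finset.Icc 2 M)) (t := Finset.Icc 2 M)
      (g := Finset.card)
      (fun e he => (Finset.mem_filter.mp he).2)
      (fun e => c e * ∑ q ∈ Q.filter (fun q : Fin n × Fin n => q.1 ∈ e ∧ q.2 ∈ e),
        (x q.1 * x q.2))
  have final : ∑ e ∈ Finset.univ.filter (fun e : Finset (Fin n) => e.card ∈ Finset.Icc 2 M),
        (∑ q ∈ Finset.univ.filter (fun q : Fin n × Fin n =>
            (|x q.1 * x q.2| ≤ r) ∧ q.1 ≠ q.2 ∧ q.1 ∈ e ∧ q.2 ∈ e), x q.1 * x q.2) * c e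
      = ∑ e ∈ Finset.univ.filter (fun e : Finset (Fin n) => e.card ∈ Finset.Icc 2 M),
          c e * ∑ q ∈ Q.filter (fun q : Fin n × Fin n => q.1 ∈ e ∧ q.2 ∈ e), x q.1 * x q.2 :=
    Finset.sum_congr rfl (fun e _ => by rw [hw e, mul_comm])
  rw [show (∑ e ∈ Finset.univ.filter (fun e : Finset (Fin n) => e.card ∈ Finset.Icc 2 M),
        (∑ q ∈ Finset.univ.filter (fun q : Fin n × Fin n =>
            (|x q.1 * x q.2| ≤ r) ∧ q.1 ≠ q.2 ∧ q.1 ∈ e ∧ q.2 ∈ e), x q.1 * x q.2)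
          * ((if T e ω then (1:ℝ) else 0) - p e)) = ∑ e ∈ Finset.univ.filter
            (fun e : Finset (Fin n) => e.card ∈ Finset.Icc 2 M),
          c e * ∑ q ∈ Q.filter (fun q : Fin n × Fin n => q.1 ∈ e ∧ q.2 ∈ e), x q.1 * x q.2
    from final, ← step3]
  apply Finset.sum_congr rfl
  intro m hm
  have hfib : (Finset.univ.filter (fun e : Finset (Fin n) => e.card ∈ Finset.Icc 2 M)).filter
        (fun e => e.card = m)
      = Finset.univ.filter (fun e : Finset (Fin n) => e.card = m) := by
    ext e
    simp only [Finset.mem_filter, Finset.mem_univ, true_and]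
    exact ⟨fun h => h.2, fun h => ⟨h ▸ hm, h⟩⟩
  rw [hfib]
section MainTheorem

open ProbabilityTheory

/-- The index set of potential edges. -/
def Efin (n M : ℕ) : Finset (Finset (Fin n)) :=
  Finset.univ.filter (fun e => e.card ∈ Finset.Icc 2 M)

/-- Light-pair weight of an edge. -/
noncomputable def wfun (n : ℕ) (x : Fin n → ℝ) (r : ℝ) (e : Finset (Fin n)) : ℝ :=
  ∑ q ∈ Finset.univ.filter (fun q : Fin n × Fin n =>
    (|x q.1 * x q.2| ≤ r) ∧ q.1 ≠ q.2 ∧ q.1 ∈ e ∧ q.2 ∈ e), x q.1 * x q.2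

lemma exp_numeric_key (n : ℕ) :
    (5:ℝ)^n * (Real.exp (-(37/8) * (n:ℝ)) + Real.exp (-(37/8) * (n:ℝ)))
      ≤ 2 * Real.exp (-(n:ℝ)) := by
  have h5 : (5:ℝ) ≤ Real.exp (29/8) := by
    have h1 := Real.add_one_le_exp (29/16 : ℝ)
    have h2 : Real.exp (29/8) = Real.exp (29/16) * Real.exp (29/16) := by
      rw [← Real.exp_add]; norm_num
    nlinarith [Real.exp_pos (29/16 : ℝ)]
  have hpow : (5:ℝ)^n ≤ Real.exp ((29/8) * (n:ℝ)) := by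
    rw [mul_comm, Real.exp_nat_mul]
    exact pow_le_pow_left₀ (by norm_num) h5 n
  have hprod : (5:ℝ)^n * Real.exp (-(37/8) * (n:ℝ)) ≤ Real.exp (-(n:ℝ)) := by
    have hex_split : Real.exp (-(37/8) * (n:ℝ))
        = Real.exp (-(n:ℝ)) * Real.exp (-((29/8) * (n:ℝ))) := by
      rw [← Real.exp_add]
      congr 1
      ring
    calc (5:ℝ)^n * Real.exp (-(37/8) * (n:ℝ))
        = ((5:ℝ)^n * Real.exp (-((29/8) * (n:ℝ)))) * Real.exp (-(n:ℝ)) := by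
          rw [hex_split]; ring
      _ ≤ (Real.exp ((29/8) * (n:ℝ)) * Real.exp (-((29/8) * (n:ℝ))))
            * Real.exp (-(n:ℝ)) := by
          apply mul_le_mul_of_nonneg_right _ (Real.exp_nonneg _)
          exact mul_le_mul_of_nonneg_right hpow (Real.exp_nonneg _)
      _ = Real.exp (-(n:ℝ)) := by
          have hcancel : Real.exp ((29/8) * (n:ℝ)) * Real.exp (-((29/8) * (n:ℝ))) = 1 := by
            rw [← Real.exp_add, add_neg_cancel, Real.exp_zero]
          rw [hcancel, one_mul]
  nlinarith [hprod]

/-- Contribution of light pairs: with probability at least `1 - 2e^{-n}`, simultaneously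
for every unit vector `x` in a net `𝓝` of size at most `5ⁿ`, the light-pair part of
`⟨(A - 𝔼A)x, x⟩` is at most `5M(M-1)·√d`. -/
theorem light_pairs_contribution
    {Ω : Type*} [MeasurableSpace Ω] (μ : Measure Ω) [IsProbabilityMeasure μ]
    (n M : ℕ) (hn : 2 ≤ n) (hM : 2 ≤ M)
    (T : Finset (Fin n) → Ω → Bool) (hTmeas : ∀ e, Measurable (T e))
    (hTindep : ProbabilityTheory.iIndepFun T μ)
    (p : Finset (Fin n) → ℝ) (hp0 : ∀ e, 0 ≤ p e)
    (hpT : ∀ e, μ {ω | T e ω = true} = ENNReal.ofReal (p e))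
    (dm : ℕ → ℝ) (hdm : ∀ m, 0 ≤ dm m)
    (hpbound : ∀ e : Finset (Fin n), e.card ∈ Finset.Icc 2 M →
      p e ≤ dm e.card / (n.choose (e.card - 1)))
    (𝓝 : Finset (Fin n → ℝ)) (h𝓝card : 𝓝.card ≤ 5 ^ n)
    (h𝓝unit : ∀ x ∈ 𝓝, ∑ i, (x i) ^ 2 = 1) :
    ENNReal.ofReal (1 - 2 * Real.exp (-(n : ℝ))) ≤
      μ {ω | ∀ x ∈ 𝓝,
        |∑ q ∈ Finset.univ.filter (fun q : Fin n × Fin n =>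
            |x q.1 * x q.2| ≤
              Real.sqrt (∑ m ∈ Finset.Icc 2 M, ((m : ℝ) - 1) * dm m) / n),
          (adjMatrix n M T ω - expAdj n M p) q.1 q.2 * x q.1 * x q.2| ≤
        5 * M * ((M : ℝ) - 1) *
          Real.sqrt (∑ m ∈ Finset.Icc 2 M, ((m : ℝ) - 1) * dm m)} := by
  classical
  set d : ℝ := ∑ m ∈ Finset.Icc 2 M, ((m : ℝ) - 1) * dm m with hd
  have hd0 : 0 ≤ d := by
    apply Finset.sum_nonneg
    intro m hm
    obtain ⟨hm2, _⟩ := Finset.mem_Icc.mp hm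
    have h1m : (1:ℝ) ≤ (m:ℝ) := by exact_mod_cast (by omega : 1 ≤ m)
    exact mul_nonneg (by linarith) (hdm m)
  set sd : ℝ := Real.sqrt d with hsd
  have hsd0 : 0 ≤ sd := Real.sqrt_nonneg _
  have hnR : (2:ℝ) ≤ (n:ℝ) := by exact_mod_cast hn
  have hnpos : (0:ℝ) < (n:ℝ) := by linarith
  have hMR : (2:ℝ) ≤ (M:ℝ) := by exact_mod_cast hM
  -- trivial bound for the probability target
  have haux : 2 * Real.exp (-(n:ℝ)) ≤ 2/3 := by
    have h1 : Real.exp (-(n:ℝ)) ≤ Real.exp (-(2:ℝ)) := Real.exp_le_exp.mpr (by linarith)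
    have h2 : (3:ℝ) ≤ Real.exp 2 := by
      have := Real.add_one_le_exp (2:ℝ); linarith
    have h3 : Real.exp (-(2:ℝ)) ≤ 1/3 := by
      rw [Real.exp_neg]
      rw [inv_le_comm₀ (by positivity) (by norm_num)]
      linarith
    linarith
  rcases eq_or_lt_of_le hd0 with hdeq | hdpos
  · -- degenerate case d = 0 : the event is everything
    have hsdz : sd = 0 := by rw [hsd, ← hdeq, Real.sqrt_zero]
    have hGood : {ω : Ω | ∀ x ∈ 𝓝,
        |∑ q ∈ Finset.univ.filter (fun q : Fin n × Fin n => |x q.1 * x q.2| ≤ sd / n),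
          (adjMatrix n M T ω - expAdj n M p) q.1 q.2 * x q.1 * x q.2| ≤
          5 * M * ((M : ℝ) - 1) * sd} = Set.univ := by
      ext ω
      simp only [Set.mem_setOf_eq, Set.mem_univ, iff_true]
      intro x hx
      have hzero : ∀ q ∈ Finset.univ.filter
          (fun q : Fin n × Fin n => |x q.1 * x q.2| ≤ sd / n),
          (adjMatrix n M T ω - expAdj n M p) q.1 q.2 * x q.1 * x q.2 = 0 := by
        intro q hq
        have h := (Finset.mem_filter.mp hq).2
        rw [hsdz, zero_div] at h
        have hxz : x q.1 * x q.2 = 0 := abs_nonpos_iff.mp h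
        rw [mul_assoc, hxz, mul_zero]
      rw [Finset.sum_eq_zero hzero, hsdz, mul_zero, abs_zero]
    rw [hGood, measure_univ]
    calc ENNReal.ofReal (1 - 2 * Real.exp (-(n:ℝ))) ≤ ENNReal.ofReal 1 :=
          ENNReal.ofReal_le_ofReal (by nlinarith [Real.exp_pos (-(n:ℝ))])
      _ = 1 := ENNReal.ofReal_one
  · -- main case d > 0
    have hsdpos : 0 < sd := Real.sqrt_pos.mpr hdpos
    set K : ℝ := (M:ℝ) * M - M with hK
    have hK2 : (2:ℝ) ≤ K := by rw [hK]; nlinarith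
    have hKpos : (0:ℝ) < K := by linarith
    set b : ℝ := K * (sd / n) with hb
    have hbpos : 0 < b := by
      rw [hb]; exact mul_pos hKpos (div_pos hsdpos hnpos)
    set σ2 : ℝ := K * (d / n) with hσ2
    set t : ℝ := 5 * (M:ℝ) * ((M:ℝ) - 1) * sd with htdef
    have ht0 : 0 ≤ t := by
      rw [htdef]; have : (0:ℝ) ≤ (M:ℝ) := by linarith
      apply mul_nonneg (by nlinarith) hsd0
    -- weight bounds
    have hwb : ∀ (x : Fin n → ℝ), ∀ e ∈ Efin n M, |wfun n x (sd/n) e| ≤ b := by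
      intro x e he
      have hcard := (Finset.mem_filter.mp he).2
      obtain ⟨h2, hM'⟩ := Finset.mem_Icc.mp hcard
      have h := weight_abs_le' n M hM x (sd/n) (by positivity) e h2 hM'
      rw [hb, hK]
      exact h
    -- variance bounds
    have hvar : ∀ x ∈ 𝓝, ∑ e ∈ Efin n M, p e * (wfun n x (sd/n) e)^2 ≤ σ2 := by
      intro x hx
      have h := variance_bound' n M hn hM p hp0 dm hdm hpbound x (h𝓝unit x hx) (sd/n)
      rw [← hd] at h
      rw [hσ2, hK]
      exact h
    have hvarneg : ∀ x ∈ 𝓝,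
        ∑ e ∈ Efin n M, p e * (-(wfun n x (sd/n) e))^2 ≤ σ2 := by
      intro x hx
      have h := hvar x hx
      simpa [neg_pow] using h
    have hwbneg : ∀ (x : Fin n → ℝ), ∀ e ∈ Efin n M, |-(wfun n x (sd/n) e)| ≤ b := by
      intro x e he
      rw [abs_neg]; exact hwb x e he
    -- exponent computation
    have hsq : sd^2 = d := Real.sq_sqrt hd0
    have hexp : -(t/b) + 3/4 * (σ2/b^2) ≤ -(37/8) * (n:ℝ) := by
      have e1 : t / b = 5 * (n:ℝ) := by
        rw [div_eq_iff hbpos.ne', htdef, hb, hK]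
        have hnsd : (n:ℝ) * (sd / n) = sd := mul_div_cancel₀ sd hnpos.ne'
        linear_combination (-5*((M:ℝ)*M-M)) * hnsd
      have e2 : σ2 / b^2 = (n:ℝ) / K := by
        rw [hσ2, hb, mul_pow, div_pow, hsq]
        field_simp
      have e3 : (n:ℝ)/K ≤ (n:ℝ)/2 := by
        rw [div_le_div_iff₀ hKpos (by norm_num : (0:ℝ) < 2)]
        nlinarith
      rw [e1, e2]
      linarith
    set ex : ℝ := Real.exp (-(37/8) * (n:ℝ)) with hex
    -- tail bounds
    have tail1 : ∀ x ∈ 𝓝, μ {ω | t ≤ ∑ e ∈ Efin n M,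
        wfun n x (sd/n) e * ((if T e ω then (1:ℝ) else 0) - p e)} ≤ ENNReal.ofReal ex := by
      intro x hx
      refine (chernoff_tail' T hTmeas hTindep p hp0 hpT (Efin n M)
        (wfun n x (sd/n)) b σ2 t hbpos (hwb x) (hvar x hx)).trans ?_
      exact ENNReal.ofReal_le_ofReal (Real.exp_le_exp.mpr hexp)
    have tail2 : ∀ x ∈ 𝓝, μ {ω | t ≤ ∑ e ∈ Efin n M,
        (-(wfun n x (sd/n) e)) * ((if T e ω then (1:ℝ) else 0) - p e)} ≤ ENNReal.ofReal ex := by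
      intro x hx
      refine (chernoff_tail' T hTmeas hTindep p hp0 hpT (Efin n M)
        (fun e => -(wfun n x (sd/n) e)) b σ2 t hbpos (hwbneg x) (hvarneg x hx)).trans ?_
      exact ENNReal.ofReal_le_ofReal (Real.exp_le_exp.mpr hexp)
    -- the bad event
    set B1 : (Fin n → ℝ) → Set Ω := fun x => {ω | t ≤ ∑ e ∈ Efin n M,
        wfun n x (sd/n) e * ((if T e ω then (1:ℝ) else 0) - p e)} with hB1
    set B2 : (Fin n → ℝ) → Set Ω := fun x => {ω | t ≤ ∑ e ∈ Efin n M,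
        (-(wfun n x (sd/n) e)) * ((if T e ω then (1:ℝ) else 0) - p e)} with hB2
    set Good : Set Ω := {ω : Ω | ∀ x ∈ 𝓝,
        |∑ q ∈ Finset.univ.filter (fun q : Fin n × Fin n => |x q.1 * x q.2| ≤ sd / n),
          (adjMatrix n M T ω - expAdj n M p) q.1 q.2 * x q.1 * x q.2| ≤
          5 * M * ((M : ℝ) - 1) * sd} with hGoodDef
    -- complement inclusion
    have hsub : Goodᶜ ⊆ ⋃ x ∈ 𝓝, (B1 x ∪ B2 x) := by
      intro ω hω
      simp only [hGoodDef, Set.mem_compl_iff, Set.mem_setOf_eq, not_forall] at hω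
      push_neg at hω
      obtain ⟨x, hx𝓝, hgt⟩ := hω
      rw [light_identity' n M T p x (sd/n) ω] at hgt
      have hgt' : t < |∑ e ∈ Efin n M,
          wfun n x (sd/n) e * ((if T e ω then (1:ℝ) else 0) - p e)| := by
        rw [htdef]
        exact hgt
      rw [Set.mem_iUnion₂]
      refine ⟨x, hx𝓝, ?_⟩
      rcases le_or_gt 0 (∑ e ∈ Efin n M,
          wfun n x (sd/n) e * ((if T e ω then (1:ℝ) else 0) - p e)) with hpos | hneg
      · left
        rw [hB1]
        simp only [Set.mem_setOf_eq]
        rw [abs_of_nonneg hpos] at hgt'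
        linarith
      · right
        rw [hB2]
        simp only [Set.mem_setOf_eq]
        rw [abs_of_neg hneg] at hgt'
        have : ∑ e ∈ Efin n M,
            (-(wfun n x (sd/n) e)) * ((if T e ω then (1:ℝ) else 0) - p e)
            = -∑ e ∈ Efin n M,
            wfun n x (sd/n) e * ((if T e ω then (1:ℝ) else 0) - p e) := by
          rw [← Finset.sum_neg_distrib]
          apply Finset.sum_congr rfl
          intro e _
          ring
        rw [this]
        linarith
    -- measure of the bad event
    have hBad : μ (⋃ x ∈ 𝓝, (B1 x ∪ B2 x)) ≤ ENNReal.ofReal (2 * Real.exp (-(n:ℝ))) := by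
      refine (measure_biUnion_finset_le 𝓝 _).trans ?_
      have hone : ∀ x ∈ 𝓝, μ (B1 x ∪ B2 x) ≤ ENNReal.ofReal ex + ENNReal.ofReal ex := by
        intro x hx
        refine (measure_union_le _ _).trans ?_
        exact add_le_add (tail1 x hx) (tail2 x hx)
      refine (Finset.sum_le_sum hone).trans ?_
      rw [Finset.sum_const, nsmul_eq_mul]
      -- (card) * (2 ofReal ex) ≤ ofReal (2 exp(-n))
      have hcd : (𝓝.card : ENNReal) ≤ ((5^n : ℕ) : ENNReal) := by exact_mod_cast h𝓝card
      have hcast : ((5^n : ℕ) : ENNReal) = ENNReal.ofReal ((5:ℝ)^n) := by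
        rw [← ENNReal.ofReal_natCast]
        congr 1
        push_cast
        ring
      have hkey : (5:ℝ)^n * (ex + ex) ≤ 2 * Real.exp (-(n:ℝ)) := by
        rw [hex]; exact exp_numeric_key n
      calc (𝓝.card : ENNReal) * (ENNReal.ofReal ex + ENNReal.ofReal ex)
          ≤ ENNReal.ofReal ((5:ℝ)^n) * ENNReal.ofReal (ex + ex) := by
            apply mul_le_mul' (le_trans hcd (le_of_eq hcast))
            rw [← ENNReal.ofReal_add (Real.exp_nonneg _) (Real.exp_nonneg _)]
        _ = ENNReal.ofReal ((5:ℝ)^n * (ex + ex)) := by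
            rw [← ENNReal.ofReal_mul (by positivity)]
        _ ≤ ENNReal.ofReal (2 * Real.exp (-(n:ℝ))) := ENNReal.ofReal_le_ofReal hkey
    -- measurability of the good event
    have hadj : ∀ i j : Fin n, Measurable (fun ω => adjMatrix n M T ω i j) := by
      intro i j
      simp only [adjMatrix, Matrix.of_apply]
      by_cases hij : i = j
      · simp only [hij, if_true]; exact measurable_const
      · simp only [hij, if_false]
        apply Finset.measurable_sum
        intro m _
        apply Finset.measurable_sum
        intro e _
        exact (measurable_from_top (f := fun bo : Bool => if bo then (1:ℝ) else 0)).comp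
          (hTmeas e)
    have hGoodMeas : MeasurableSet Good := by
      have heq : Good = ⋂ x ∈ (𝓝 : Finset (Fin n → ℝ)),
          {ω : Ω | |∑ q ∈ Finset.univ.filter
              (fun q : Fin n × Fin n => |x q.1 * x q.2| ≤ sd / n),
            (adjMatrix n M T ω - expAdj n M p) q.1 q.2 * x q.1 * x q.2| ≤
            5 * M * ((M : ℝ) - 1) * sd} := by
        rw [hGoodDef]; ext ω; simp
      rw [heq]
      apply MeasurableSet.biInter (𝓝.countable_toSet)
      intro x _
      apply measurableSet_le _ measurable_const
      apply Measurable.abs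
      apply Finset.measurable_sum
      intro q _
      have : (fun ω => (adjMatrix n M T ω - expAdj n M p) q.1 q.2 * x q.1 * x q.2)
          = fun ω => ((adjMatrix n M T ω q.1 q.2) - expAdj n M p q.1 q.2)
              * x q.1 * x q.2 := rfl
      rw [this]
      exact (((hadj q.1 q.2).sub measurable_const).mul_const (x q.1)).mul_const (x q.2)
    -- conclude
    have hcompl : μ Goodᶜ ≤ ENNReal.ofReal (2 * Real.exp (-(n:ℝ))) :=
      (measure_mono hsub).trans hBad
    have h1le : (1:ENNReal) ≤ μ Good + μ Goodᶜ := by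
      rw [measure_add_measure_compl hGoodMeas, measure_univ]
    calc ENNReal.ofReal (1 - 2 * Real.exp (-(n:ℝ)))
        = 1 - ENNReal.ofReal (2 * Real.exp (-(n:ℝ))) := by
          rw [ENNReal.ofReal_sub _ (by positivity), ENNReal.ofReal_one]
      _ ≤ 1 - μ Goodᶜ := tsub_le_tsub_left hcompl 1
      _ ≤ μ Good := by
          rw [tsub_le_iff_right]
          exact h1le.trans (by rw [add_comm])

end MainTheorem
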